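/- Let R be a commutative ring, S a multiplicatively closed subset, M an R-module, and N an S-2-absorbing second submodule of M. If K is a submodule of M with (K :_R N) ∩ S = ∅, then (K :_R N) is an S-2-absorbing ideal of R. -/

import Mathlib

open Pointwise

/-- `S` is a multiplicatively closed subset of `R`: `0 ∉ S`, `1 ∈ S`, closed under products. -/
def IsMCS {R : Type*} [CommRing R] (S : Set R) : Prop :=
  (0 : R) ∉ S ∧ (1 : R) ∈ S ∧ ∀ s ∈ S, ∀ t ∈ S, s * t ∈ S

/-- `N` is an `S`-2-absorbing submodule of `M`. -/
def IsS2AbsorbingSubmodule {R M : Type*} [CommRing R] [AddCommGroup M] [Module R M]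
    (S : Set R) (N : Submodule R M) : Prop :=
  (∀ s ∈ S, s ∉ N.colon ⊤) ∧
  ∃ s ∈ S, ∀ a b : R, ∀ m : M, (a * b) • m ∈ N →
    s * (a * b) ∈ N.colon ⊤ ∨ (s * a) • m ∈ N ∨ (s * b) • m ∈ N

/-- `I` is an `S`-2-absorbing ideal of `R`. -/
def IsS2AbsorbingIdeal {R : Type*} [CommRing R] (S : Set R) (I : Ideal R) : Prop :=
  (∀ s ∈ S, s ∉ I) ∧
  ∃ s ∈ S, ∀ a b c : R, a * b * c ∈ I →
    s * (a * b) ∈ I ∨ s * (a * c) ∈ I ∨ s * (b * c) ∈ I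

/-- `N` is an `S`-2-absorbing second submodule of `M`. -/
def IsS2AbsorbingSecond {R M : Type*} [CommRing R] [AddCommGroup M] [Module R M]
    (S : Set R) (N : Submodule R M) : Prop :=
  (∀ s ∈ S, s ∉ N.annihilator) ∧
  ∃ s ∈ S, ∀ a b : R, ∀ K : Submodule R M, (a * b) • N ≤ K →
    (s * a) • N ≤ K ∨ (s * b) • N ≤ K ∨ (s * (a * b)) • N = ⊥

/-- `N` is an `S`-second submodule of `M`. -/
def IsSSecond {R M : Type*} [CommRing R] [AddCommGroup M] [Module R M]
    (S : Set R) (N : Submodule R M) : Prop :=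
  (∀ s ∈ S, s ∉ N.annihilator) ∧
  ∃ s ∈ S, ∀ r : R, ∀ K : Submodule R M, r • N ≤ K →
    (r * s) • N = ⊥ ∨ s • N ≤ K

/-- `N` is a strongly 2-absorbing second submodule of `M`. -/
def IsStrongly2AbsorbingSecond {R M : Type*} [CommRing R] [AddCommGroup M] [Module R M]
    (N : Submodule R M) : Prop :=
  N ≠ ⊥ ∧ ∀ a b : R, ∀ K : Submodule R M, (a * b) • N ≤ K →
    a • N ≤ K ∨ b • N ≤ K ∨ (a * b) • N = ⊥


theorem stmt12 {R M : Type*} [CommRing R] [AddCommGroup M] [Module R M]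
    (S : Set R) (hS : IsMCS S) (N K : Submodule R M)
    (hN : IsS2AbsorbingSecond S N)
    (hdisj : ∀ s ∈ S, s ∉ K.colon N) :
    IsS2AbsorbingIdeal S (K.colon N) := by
  obtain ⟨hann, s, hsS, hs⟩ := hN
  refine ⟨hdisj, s, hsS, ?_⟩
  intro a b c habc
  have key : ∀ r : R, r • N ≤ K.comap (LinearMap.lsmul R M c) →
      r * c ∈ K.colon N := by
    intro r hr
    rw [Submodule.mem_colon]
    intro n hn
    have : r • n ∈ K.comap (LinearMap.lsmul R M c) :=
      hr (Submodule.smul_mem_pointwise_smul n r N hn)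
    simp only [Submodule.mem_comap, LinearMap.lsmul_apply] at this
    rwa [smul_smul, mul_comm c r] at this
  have hK' : (a * b) • N ≤ K.comap (LinearMap.lsmul R M c) := by
    intro m hm
    obtain ⟨n, hn, rfl⟩ := Submodule.mem_map.mp hm
    simp only [Submodule.mem_comap, LinearMap.lsmul_apply,
      DistribSMul.toLinearMap_apply]
    have := Submodule.mem_colon.mp habc n hn
    rwa [smul_smul, mul_comm c (a * b)]
  rcases hs a b _ hK' with h | h | h
  · right; left
    have := key (s * a) h
    rwa [mul_assoc] at this
  · right; right
    have := key (s * b) h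
    rwa [mul_assoc] at this
  · left
    rw [Submodule.mem_colon]
    intro n hn
    have : (s * (a * b)) • n ∈ (s * (a * b)) • N :=
      Submodule.smul_mem_pointwise_smul n _ N hn
    rw [h] at this
    simp only [Submodule.mem_bot] at this
    rw [this]
    exact K.zero_mem
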